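/- Let x ∈ L²(𝕋) have Fourier coefficients x̂(n) = 0 for all n ≤ 0. In H := L²(𝕋, ℂ²), let W be the smallest closed subspace that contains the two vectors (1, 0) and (conj(x), 1) (where conj(x) is the pointwise complex conjugate of x) and is invariant under the operator M_z of multiplication by the coordinate function z. Then: (i) ⋂_{k≥0} M_z^k W = {0}; and (ii) ⋃_{k≥0} M_z^{-k} W is dense in H. -/

import Mathlib

open MeasureTheory AddCircle

noncomputable section

local instance : Fact (0 < 2 * Real.pi) := ⟨by positivity⟩

/-- The circle, realized as `ℝ / 2πℤ`, with its normalized Haar measure `haarAddCircle`. -/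
abbrev 𝕋c : Type := AddCircle (2 * Real.pi)

/-- `ℂ²`. -/
abbrev E2 : Type := EuclideanSpace ℂ (Fin 2)

/-- `H = L²(𝕋, ℂ²)`. -/
abbrev Hsp : Type := Lp E2 2 (@haarAddCircle (2 * Real.pi) _)

/-- The smallest closed subspace of `H` containing `w₁` and `w₂` and invariant under the
operator `Mz`. -/
def smallestInvariant (Mz : Hsp →L[ℂ] Hsp) (w1 w2 : Hsp) : Submodule ℂ Hsp :=
  sInf {K : Submodule ℂ Hsp |
    IsClosed (K : Set Hsp) ∧ (∀ f ∈ K, Mz f ∈ K) ∧ w1 ∈ K ∧ w2 ∈ K}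

abbrev L2C : Type := Lp ℂ 2 (@haarAddCircle (2 * Real.pi) _)

local notation "μh" => @haarAddCircle (2 * Real.pi) _
local notation "⟪" x ", " y "⟫" => @inner ℂ _ _ x y

/-- The component projections `H → L²(𝕋, ℂ)`. -/
def Pc (i : Fin 2) : Hsp →L[ℂ] L2C :=
  (EuclideanSpace.proj i : E2 →L[ℂ] ℂ).compLpL 2 μh

lemma coeFn_Pc (i : Fin 2) (f : Hsp) : ⇑(Pc i f) =ᵐ[μh] fun t => f t i := by
  filter_upwards [ContinuousLinearMap.coeFn_compLpL (EuclideanSpace.proj i : E2 →L[ℂ] ℂ) f]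
    with t ht
  simpa [Pc] using ht

lemma innerL2 (g h : L2C) : ⟪g, h⟫ = ∫ t, (starRingEnd ℂ) (g t) * h t ∂μh := by
  rw [MeasureTheory.L2.inner_def]
  congr 1
  funext t; rw [RCLike.inner_apply]; ring

lemma eL_def (n : ℤ) : ⇑(fourierLp (T := 2 * Real.pi) 2 n) =ᵐ[μh] fourier n :=
  coeFn_fourierLp 2 n

lemma inner_eL (n : ℤ) (h : L2C) :
    ⟪(fourierLp (T := 2 * Real.pi) 2 n : L2C), h⟫ = ∫ t, (fourier (-n) t : ℂ) * h t ∂μh := by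
  rw [innerL2]
  refine integral_congr_ae ?_
  filter_upwards [eL_def n] with t ht
  rw [ht, fourier_neg]

lemma memy (x : L2C) (n : ℤ) : MemLp (fun t => (x : 𝕋c → ℂ) t * fourier n t) 2 μh := by
  refine MemLp.of_le (Lp.memLp x)
    ((Lp.aestronglyMeasurable x).mul (map_continuous (fourier n)).aestronglyMeasurable) ?_
  refine Filter.Eventually.of_forall fun t => ?_
  have h1 : ‖(fourier n t : ℂ)‖ = 1 := Circle.norm_coe _
  rw [norm_mul, h1, mul_one]

/-- The auxiliary vectors `x ⬝ eₙ ∈ L²`. -/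
def yv (x : L2C) (n : ℤ) : L2C := (memy x n).toLp _

lemma coeFn_yv (x : L2C) (n : ℤ) : ⇑(yv x n) =ᵐ[μh] fun t => (x : 𝕋c → ℂ) t * fourier n t :=
  (memy x n).coeFn_toLp

lemma inner_yv (x : L2C) (n : ℤ) (h : L2C) :
    ⟪yv x n, h⟫ = ∫ t, (starRingEnd ℂ) (x t) * (fourier (-n) t : ℂ) * h t ∂μh := by
  rw [innerL2]
  refine integral_congr_ae ?_
  filter_upwards [coeFn_yv x n] with t ht
  rw [ht, map_mul, fourier_neg]

lemma hfour (g : L2C) (h : ∀ n : ℤ, ⟪(fourierLp (T := 2 * Real.pi) 2 n : L2C), g⟫ = 0) :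
    g = 0 := by
  have h1 : ∀ n : ℤ, fourierBasis.repr g n = 0 := by
    intro n
    rw [fourierBasis.repr_apply_apply]
    rw [show (fourierBasis (T := 2 * Real.pi)) n = fourierLp 2 n from congrFun coe_fourierBasis n]
    exact h n
  have h2 : (fourierBasis (T := 2 * Real.pi)).repr g = 0 := by
    ext n; simpa using h1 n
  calc g = fourierBasis.repr.symm (fourierBasis.repr g) := (fourierBasis.repr.symm_apply_apply g).symm
  _ = 0 := by rw [h2, map_zero]

lemma fzero (f : Hsp) (h0 : Pc 0 f = 0) (h1 : Pc 1 f = 0) : f = 0 := by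
  have e0 : (fun t => (f : 𝕋c → E2) t 0) =ᵐ[μh] 0 := by
    have := (coeFn_Pc 0 f).symm.trans ((h0 ▸ Lp.coeFn_zero ℂ 2 μh : ⇑(Pc 0 f) =ᵐ[μh] 0))
    exact this
  have e1 : (fun t => (f : 𝕋c → E2) t 1) =ᵐ[μh] 0 := by
    exact (coeFn_Pc 1 f).symm.trans ((h1 ▸ Lp.coeFn_zero ℂ 2 μh : ⇑(Pc 1 f) =ᵐ[μh] 0))
  refine Lp.ext ?_
  filter_upwards [e0, e1, Lp.coeFn_zero E2 2 μh] with t a b c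
  rw [c]
  refine PiLp.ext fun i => ?_
  fin_cases i
  · exact a
  · exact b

/-- The closed subspace cutting out part (i). -/
def Ksub (x : L2C) : Submodule ℂ Hsp where
  carrier := {f | ∀ n : ℤ, n < 0 →
    ⟪(fourierLp (T := 2 * Real.pi) 2 n : L2C), Pc 1 f⟫ = 0 ∧
    ⟪(fourierLp (T := 2 * Real.pi) 2 n : L2C), Pc 0 f⟫ = ⟪yv x n, Pc 1 f⟫}
  add_mem' := by
    intro a b ha hb n hn
    simp only [map_add, inner_add_right]
    rw [(ha n hn).1, (hb n hn).1, (ha n hn).2, (hb n hn).2]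
    simp
  zero_mem' := by
    intro n hn
    simp
  smul_mem' := by
    intro c a ha n hn
    simp only [_root_.map_smul, inner_smul_right]
    rw [(ha n hn).1, (ha n hn).2]
    simp

lemma isClosed_Ksub (x : L2C) : IsClosed ((Ksub x : Submodule ℂ Hsp) : Set Hsp) := by
  have : ((Ksub x : Submodule ℂ Hsp) : Set Hsp) = ⋂ (n : ℤ), ⋂ (_ : n < 0),
      ({f : Hsp | ⟪(fourierLp (T := 2 * Real.pi) 2 n : L2C), Pc 1 f⟫ = 0} ∩
       {f : Hsp | ⟪(fourierLp (T := 2 * Real.pi) 2 n : L2C), Pc 0 f⟫ = ⟪yv x n, Pc 1 f⟫}) := by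
    ext f
    simp only [Set.mem_iInter, Set.mem_inter_iff, Set.mem_setOf_eq]
    rfl
  rw [this]
  refine isClosed_iInter fun n => isClosed_iInter fun _ => IsClosed.inter ?_ ?_
  · exact isClosed_eq (Continuous.inner continuous_const (Pc 1).continuous) continuous_const
  · exact isClosed_eq (Continuous.inner continuous_const (Pc 0).continuous)
      (Continuous.inner continuous_const (Pc 1).continuous)

/-- Let `x ∈ L²(𝕋)` with `x̂(n) = 0` for all `n ≤ 0`, and let `W` be the smallest closed
`M_z`-invariant subspace of `H = L²(𝕋, ℂ²)` containing `(1, 0)` and `(conj x, 1)`. Then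
`⋂_{k≥0} M_z^k W = {0}` and `⋃_{k≥0} M_z^{-k} W` is dense in `H`.  Here `M_z` is
multiplication by the coordinate function `z` (i.e. by `fourier 1`) and `M_z^{-1}` is
multiplication by `z^{-1}` (i.e. by `fourier (-1)`). -/
theorem stmt10 (x : Lp ℂ 2 (@haarAddCircle (2 * Real.pi) _))
    (hx : ∀ n : ℤ, n ≤ 0 → fourierCoeff (⇑x : 𝕋c → ℂ) n = 0)
    (w1 w2 : Hsp)
    (hw1 : (⇑w1 : 𝕋c → E2) =ᵐ[@haarAddCircle (2 * Real.pi) _]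
      fun _ => (WithLp.equiv 2 (Fin 2 → ℂ)).symm ![1, 0])
    (hw2 : (⇑w2 : 𝕋c → E2) =ᵐ[@haarAddCircle (2 * Real.pi) _]
      fun t => (WithLp.equiv 2 (Fin 2 → ℂ)).symm ![starRingEnd ℂ (x t), 1])
    (Mz Mzinv : Hsp →L[ℂ] Hsp)
    (hMz : ∀ f : Hsp, (⇑(Mz f) : 𝕋c → E2) =ᵐ[@haarAddCircle (2 * Real.pi) _]
      fun t => (fourier 1 t : ℂ) • f t)
    (hMzinv : ∀ f : Hsp, (⇑(Mzinv f) : 𝕋c → E2) =ᵐ[@haarAddCircle (2 * Real.pi) _]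
      fun t => (fourier (-1) t : ℂ) • f t) :
    (⋂ k : ℕ, ⇑(Mz ^ k) '' ((smallestInvariant Mz w1 w2 : Submodule ℂ Hsp) : Set Hsp))
        = {0} ∧
    Dense (⋃ k : ℕ, ⇑(Mzinv ^ k) '' ((smallestInvariant Mz w1 w2 : Submodule ℂ Hsp) : Set Hsp)) := by
  set W := smallestInvariant Mz w1 w2 with hWdef
  -- basic properties of W
  have hw1W : w1 ∈ W := Submodule.mem_sInf.mpr fun K hK => hK.2.2.1
  have hw2W : w2 ∈ W := Submodule.mem_sInf.mpr fun K hK => hK.2.2.2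
  have hWinv : ∀ f ∈ W, Mz f ∈ W := fun f hf =>
    Submodule.mem_sInf.mpr fun K hK => hK.2.1 f (Submodule.mem_sInf.mp hf K hK)
  have hWpow : ∀ (j : ℕ), ∀ w ∈ W, (Mz ^ j) w ∈ W := by
    intro j
    induction j with
    | zero => intro w hw; simpa using hw
    | succ j ih =>
      intro w hw
      rw [pow_succ, ContinuousLinearMap.mul_apply]
      exact ih (Mz w) (hWinv w hw)
  -- coordinates of w1 and w2
  have hw1c0 : (fun t => (w1 : 𝕋c → E2) t 0) =ᵐ[μh] fun _ => (1 : ℂ) := by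
    filter_upwards [hw1] with t h; rw [h]; simp [PiLp.toLp_apply]
  have hw1c1 : (fun t => (w1 : 𝕋c → E2) t 1) =ᵐ[μh] fun _ => (0 : ℂ) := by
    filter_upwards [hw1] with t h; rw [h]; simp [PiLp.toLp_apply]
  have hw2c0 : (fun t => (w2 : 𝕋c → E2) t 0) =ᵐ[μh] fun t => (starRingEnd ℂ) (x t) := by
    filter_upwards [hw2] with t h; rw [h]; simp [PiLp.toLp_apply]
  have hw2c1 : (fun t => (w2 : 𝕋c → E2) t 1) =ᵐ[μh] fun _ => (1 : ℂ) := by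
    filter_upwards [hw2] with t h; rw [h]; simp [PiLp.toLp_apply]
  -- coordinatewise action of Mz
  have hPcMz : ∀ (f : Hsp) (i : Fin 2),
      ⇑(Pc i (Mz f)) =ᵐ[μh] fun t => (fourier 1 t : ℂ) * f t i := by
    intro f i
    filter_upwards [coeFn_Pc i (Mz f), hMz f] with t h1 h2
    rw [h1, h2]
    simp [PiLp.smul_apply, smul_eq_mul]
  -- shift property
  have hshift : ∀ (f : Hsp) (i : Fin 2) (n : ℤ),
      ⟪(fourierLp (T := 2 * Real.pi) 2 n : L2C), Pc i (Mz f)⟫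
        = ⟪(fourierLp (T := 2 * Real.pi) 2 (n - 1) : L2C), Pc i f⟫ := by
    intro f i n
    rw [inner_eL, inner_eL]
    refine integral_congr_ae ?_
    filter_upwards [hPcMz f i, coeFn_Pc i f] with t h1 h2
    rw [h1, h2, ← mul_assoc, ← fourier_add, show -n + 1 = -(n - 1) by ring]
  have hyshift : ∀ (f : Hsp) (n : ℤ),
      ⟪yv x n, Pc 1 (Mz f)⟫ = ⟪yv x (n - 1), Pc 1 f⟫ := by
    intro f n
    rw [inner_yv, inner_yv]
    refine integral_congr_ae ?_
    filter_upwards [hPcMz f 1, coeFn_Pc 1 f] with t h1 h2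
    rw [h1, h2, show -(n - 1) = -n + 1 by ring, fourier_add]
    ring
  have hpow : ∀ (k : ℕ) (f : Hsp) (i : Fin 2) (n : ℤ),
      ⟪(fourierLp (T := 2 * Real.pi) 2 n : L2C), Pc i ((Mz ^ k) f)⟫
        = ⟪(fourierLp (T := 2 * Real.pi) 2 (n - k) : L2C), Pc i f⟫ := by
    intro k
    induction k with
    | zero => intro f i n; simp
    | succ k ih =>
      intro f i n
      rw [pow_succ, ContinuousLinearMap.mul_apply, ih, hshift,
        show ((n - (k : ℤ)) - 1) = n - ((k : ℕ) + 1 : ℕ) by push_cast; ring]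
  -- W is contained in Ksub x
  have hWK : W ≤ Ksub x := by
    refine sInf_le ⟨isClosed_Ksub x, ?_, ?_, ?_⟩
    · -- invariance
      intro f hf n hn
      constructor
      · rw [hshift]
        exact (hf (n - 1) (by omega)).1
      · rw [hshift, hyshift]
        exact (hf (n - 1) (by omega)).2
    · -- w1 ∈ Ksub
      intro n hn
      constructor
      · rw [inner_eL]
        rw [show (0 : ℂ) = ∫ _ : 𝕋c, (0 : ℂ) ∂μh by simp]
        refine integral_congr_ae ?_
        filter_upwards [coeFn_Pc 1 w1, hw1c1] with t h1 h2
        rw [h1, h2, mul_zero]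
      · rw [show ⟪yv x n, Pc 1 w1⟫ = ∫ _ : 𝕋c, (0 : ℂ) ∂μh from ?_]
        · rw [integral_zero]
          have horth : ⟪(fourierLp (T := 2 * Real.pi) 2 n : L2C),
              (fourierLp (T := 2 * Real.pi) 2 0 : L2C)⟫ = 0 := by
            have := orthonormal_iff_ite.mp (orthonormal_fourier (T := 2 * Real.pi)) n 0
            rwa [if_neg hn.ne] at this
          rw [← horth, inner_eL, inner_eL]
          refine integral_congr_ae ?_
          filter_upwards [coeFn_Pc 0 w1, hw1c0, eL_def 0] with t h1 h2 h3
          rw [h1, h2, h3, fourier_zero]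
        · rw [inner_yv]
          refine integral_congr_ae ?_
          filter_upwards [coeFn_Pc 1 w1, hw1c1] with t h1 h2
          rw [h1, h2, mul_zero]
    · -- w2 ∈ Ksub
      intro n hn
      constructor
      · have horth : ⟪(fourierLp (T := 2 * Real.pi) 2 n : L2C),
            (fourierLp (T := 2 * Real.pi) 2 0 : L2C)⟫ = 0 := by
          have := orthonormal_iff_ite.mp (orthonormal_fourier (T := 2 * Real.pi)) n 0
          rwa [if_neg hn.ne] at this
        rw [← horth, inner_eL, inner_eL]
        refine integral_congr_ae ?_
        filter_upwards [coeFn_Pc 1 w2, hw2c1, eL_def 0] with t h1 h2 h3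
        rw [h1, h2, h3, fourier_zero]
      · rw [inner_eL, inner_yv]
        refine integral_congr_ae ?_
        filter_upwards [coeFn_Pc 0 w2, hw2c0, coeFn_Pc 1 w2, hw2c1] with t h1 h2 h3 h4
        rw [h1, h2, h3, h4]
        ring
  constructor
  · -- part (i)
    refine Set.eq_singleton_iff_unique_mem.mpr ⟨?_, ?_⟩
    · exact Set.mem_iInter.mpr fun k => ⟨0, W.zero_mem, map_zero _⟩
    · intro f hf
      have hfk : ∀ k : ℕ, ∃ g, g ∈ W ∧ (Mz ^ k) g = f := by
        intro k
        obtain ⟨g, hg, hgf⟩ := Set.mem_iInter.mp hf k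
        exact ⟨g, hg, hgf⟩
      have h1 : Pc 1 f = 0 := by
        refine hfour _ fun n => ?_
        obtain ⟨g, hg, hgf⟩ := hfk (n.natAbs + 1)
        rw [← hgf, hpow]
        exact ((hWK hg) _ (by omega : (n - ((n.natAbs + 1 : ℕ) : ℤ)) < 0)).1
      have h1g : ∀ (k : ℕ) (g : Hsp), (Mz ^ k) g = f → Pc 1 g = 0 := by
        intro k g hgf
        refine hfour _ fun m => ?_
        have hh := hpow k g 1 (m + k)
        rw [hgf, show ((m + k : ℤ) - k) = m by ring] at hh
        rw [← hh, h1, inner_zero_right]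
      have h0 : Pc 0 f = 0 := by
        refine hfour _ fun n => ?_
        obtain ⟨g, hg, hgf⟩ := hfk (n.natAbs + 1)
        rw [← hgf, hpow]
        have h2 := ((hWK hg) _ (by omega : (n - ((n.natAbs + 1 : ℕ) : ℤ)) < 0)).2
        rw [h2, h1g _ _ hgf, inner_zero_right]
      exact fzero f h0 h1
  · -- part (ii)
    have hMzinvMz : ∀ g : Hsp, Mzinv (Mz g) = g := by
      intro g
      refine Lp.ext ?_
      filter_upwards [hMzinv (Mz g), hMz g] with t h1 h2
      rw [h1, h2, smul_smul, ← fourier_add,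
        show (-1 + 1 : ℤ) = 0 by ring, fourier_zero, one_smul]
    set V : ℕ → Submodule ℂ Hsp := fun k => W.map ((Mzinv ^ k : Hsp →L[ℂ] Hsp) : Hsp →ₗ[ℂ] Hsp) with hVdef
    have hmono : Monotone V := by
      refine monotone_nat_of_le_succ fun k => ?_
      rintro u hu
      obtain ⟨w, hw, rfl⟩ := Submodule.mem_map.mp hu
      refine Submodule.mem_map.mpr ⟨Mz w, hWinv w hw, ?_⟩
      rw [pow_succ]; simp only [ContinuousLinearMap.coe_coe]
      rw [ContinuousLinearMap.mul_apply, hMzinvMz]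
    have hMzpow : ∀ (j : ℕ) (g : Hsp),
        ⇑((Mz ^ j) g) =ᵐ[μh] fun t => (fourier (j : ℤ) t : ℂ) • g t := by
      intro j
      induction j with
      | zero =>
        intro g
        rw [pow_zero, ContinuousLinearMap.one_apply]
        refine Filter.Eventually.of_forall fun t => ?_
        simp
      | succ j ih =>
        intro g
        rw [pow_succ, ContinuousLinearMap.mul_apply]
        filter_upwards [ih (Mz g), hMz g] with t h1 h2
        rw [h1, h2, smul_smul, ← fourier_add,
          show ((j : ℤ) + 1) = (((j + 1 : ℕ) : ℤ)) by push_cast; ring]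
    have hMzinvpow : ∀ (k : ℕ) (g : Hsp),
        ⇑((Mzinv ^ k) g) =ᵐ[μh] fun t => (fourier (-(k : ℤ)) t : ℂ) • g t := by
      intro k
      induction k with
      | zero =>
        intro g
        rw [pow_zero, ContinuousLinearMap.one_apply]
        refine Filter.Eventually.of_forall fun t => ?_
        simp
      | succ k ih =>
        intro g
        rw [pow_succ, ContinuousLinearMap.mul_apply]
        filter_upwards [ih (Mzinv g), hMzinv g] with t h1 h2
        rw [h1, h2, smul_smul, ← fourier_add,
          show ((-(k : ℤ)) + -1) = (-((k + 1 : ℕ) : ℤ)) by push_cast; ring]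
    have htop : (⨆ k, V k).topologicalClosure = ⊤ := by
      rw [Submodule.topologicalClosure_eq_top_iff, Submodule.eq_bot_iff]
      intro f hf
      have hinner : ∀ u ∈ ⨆ k, V k, ⟪u, f⟫ = 0 := fun u hu =>
        (Submodule.mem_orthogonal _ f).mp hf u hu
      have main : ∀ (w : Hsp), w ∈ W → ∀ n : ℤ,
          ∫ t, ⟪(w : 𝕋c → E2) t, f t⟫ * (fourier (-n) t : ℂ) ∂μh = 0 := by
        intro w hw n
        have hjk : ((n.toNat : ℤ)) - ((-n).toNat : ℤ) = n := by omega
        have hu : (Mzinv ^ (-n).toNat) ((Mz ^ n.toNat) w) ∈ ⨆ k, V k :=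
          le_iSup V (-n).toNat (Submodule.mem_map.mpr ⟨(Mz ^ n.toNat) w, hWpow _ w hw, rfl⟩)
        have h0 := hinner _ hu
        rw [MeasureTheory.L2.inner_def] at h0
        rw [← h0]
        refine integral_congr_ae ?_
        filter_upwards [hMzinvpow (-n).toNat ((Mz ^ n.toNat) w), hMzpow n.toNat w] with t h1 h2
        rw [h1, h2, smul_smul, ← fourier_add, inner_smul_left,
          show (-(((-n).toNat : ℤ)) + (n.toNat : ℤ)) = n by omega, ← fourier_neg]
        ring
      have e0fromP : ∀ (i : Fin 2), Pc i f = 0 → (fun t => (f : 𝕋c → E2) t i) =ᵐ[μh] 0 := by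
        intro i h
        exact (coeFn_Pc i f).symm.trans ((h ▸ Lp.coeFn_zero ℂ 2 μh : ⇑(Pc i f) =ᵐ[μh] 0))
      have hP0 : Pc 0 f = 0 := by
        refine hfour _ fun n => ?_
        have hm := main w1 hw1W n
        rw [inner_eL, ← hm]
        refine integral_congr_ae ?_
        filter_upwards [hw1c0, hw1c1, coeFn_Pc 0 f] with t h1 h2 h3
        rw [h3, PiLp.inner_apply, Fin.sum_univ_two, RCLike.inner_apply, RCLike.inner_apply,
          h1, h2]
        simp only [map_one, map_zero, one_mul, zero_mul, add_zero]
        ring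
      have hP1 : Pc 1 f = 0 := by
        refine hfour _ fun n => ?_
        have hm := main w2 hw2W n
        rw [inner_eL, ← hm]
        refine integral_congr_ae ?_
        filter_upwards [hw2c0, hw2c1, coeFn_Pc 1 f, e0fromP 0 hP0] with t h1 h2 h3 h4
        rw [h3, PiLp.inner_apply, Fin.sum_univ_two, RCLike.inner_apply, RCLike.inner_apply,
          h1, h2, h4]
        simp only [map_one, one_mul, mul_zero, zero_add, Pi.zero_apply]
        ring
      exact (Submodule.mem_bot ℂ).mpr (fzero f hP0 hP1)
    have hset : (⋃ k : ℕ, ⇑(Mzinv ^ k) '' (W : Set Hsp)) = (↑(⨆ k, V k) : Set Hsp) := by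
      rw [Submodule.coe_iSup_of_directed V hmono.directed_le]
      refine Set.iUnion_congr fun k => ?_
      exact (Submodule.map_coe _ _).symm
    rw [hset]
    exact Submodule.dense_iff_topologicalClosure_eq_top.mpr htop

end
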